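/- Let G be a subgroup of the symmetric group Sym(Ω) on a set Ω whose natural action on Ω is transitive, let α ∈ Ω, let H be the stabilizer of α in G, and let C be the centralizer of G in Sym(Ω) (i.e. the subgroup of all permutations of Ω commuting with every element of G). Then C is isomorphic, as a group, to the quotient N_G(H)/H of the normalizer of H in G by H. -/

import Mathlib

/-- If `G` is a transitive subgroup of `Sym(Ω)`, `H` is the stabilizer of a
point `α`, and `C` is the centralizer of `G` in `Sym(Ω)`, then `C ≅ N_G(H)/H`. -/
theorem centralizer_iso_normalizer_quotient
    {Ω : Type*} (G : Subgroup (Equiv.Perm Ω)) (α : Ω)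
    (htrans : MulAction.IsPretransitive G Ω)
    (H : Subgroup G) (hH : H = MulAction.stabilizer G α)
    (C : Subgroup (Equiv.Perm Ω))
    (hC : C = Subgroup.centralizer (G : Set (Equiv.Perm Ω))) :
    Nonempty (C ≃* (Subgroup.normalizer (H : Set G) ⧸ H.subgroupOf (Subgroup.normalizer (H : Set G)))) := by
  subst hH hC
  obtain ⟨t, ht⟩ : ∃ t : Ω → G, ∀ β, t β • α = β :=
    ⟨fun β => (htrans.exists_smul_eq α β).choose,
     fun β => (htrans.exists_smul_eq α β).choose_spec⟩
  set Hs := MulAction.stabilizer G α with hHs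
  set N := Subgroup.normalizer (Hs : Set G) with hN
  -- key well-definedness lemma
  have wd : ∀ n ∈ N, ∀ g : G, (t (g • α) * n⁻¹) • α = (g * n⁻¹) • α := by
    intro n hn g
    have h1 : (t (g • α))⁻¹ * g ∈ Hs := by
      rw [hHs, MulAction.mem_stabilizer_iff, mul_smul, inv_smul_eq_iff, ht]
    have h2 : n * ((t (g • α))⁻¹ * g) * n⁻¹ ∈ Hs :=
      (Subgroup.mem_normalizer_iff.mp hn _).mp h1
    rw [hHs, MulAction.mem_stabilizer_iff] at h2
    have hmul : (t (g • α) * n⁻¹) * (n * ((t (g • α))⁻¹ * g) * n⁻¹) = g * n⁻¹ := by group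
    calc (t (g • α) * n⁻¹) • α
        = (t (g • α) * n⁻¹) • ((n * ((t (g • α))⁻¹ * g) * n⁻¹) • α) := by rw [h2]
      _ = (g * n⁻¹) • α := by rw [smul_smul, hmul]
  -- the underlying function of the permutation associated to n
  let F : G → Ω → Ω := fun n β => (t β * n⁻¹) • α
  have hF : ∀ n ∈ N, ∀ g : G, F n (g • α) = (g * n⁻¹) • α := fun n hn g => wd n hn g
  have hFinv : ∀ n ∈ N, Function.LeftInverse (F n⁻¹) (F n) := by
    intro n hn β
    have : F n β = (t β * n⁻¹) • α := rfl
    rw [this, hF n⁻¹ (N.inv_mem hn) (t β * n⁻¹)]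
    simp [ht]
  -- the permutation
  let cp : ∀ n : N, Equiv.Perm Ω := fun n =>
    { toFun := F ↑n
      invFun := F (↑n)⁻¹
      left_inv := hFinv ↑n n.2
      right_inv := by
        have := hFinv (↑n)⁻¹ (N.inv_mem n.2)
        simpa [Function.RightInverse] using this }
  have cp_apply : ∀ (n : N) (g : G), cp n (g • α) = (g * (↑n)⁻¹) • α :=
    fun n g => hF ↑n n.2 g
  have cp_mem : ∀ n : N, cp n ∈ Subgroup.centralizer (G : Set (Equiv.Perm Ω)) := by
    intro n
    rw [Subgroup.mem_centralizer_iff]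
    intro g hg
    ext β
    show g ((cp n) β) = (cp n) (g β)
    have e2 : ∀ x : Ω, g x = (⟨g, hg⟩ : G) • x := fun _ => rfl
    rw [e2, e2]
    conv_lhs => rw [← ht β]
    conv_rhs => rw [← ht β]
    rw [cp_apply, smul_smul, smul_smul, cp_apply, mul_assoc]
  -- the homomorphism
  let φ : N →* Subgroup.centralizer (G : Set (Equiv.Perm Ω)) :=
    MonoidHom.mk' (fun n => ⟨cp n, cp_mem n⟩) (by
      intro m n
      ext β
      have hβ : β = t β • α := (ht β).symm
      show cp (m * n) β = cp m (cp n β)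
      rw [hβ, cp_apply, cp_apply, cp_apply]
      simp [mul_assoc])
  have hker : φ.ker = Hs.subgroupOf N := by
    ext n
    constructor
    · intro hn
      have h1 : cp n = 1 := congrArg Subtype.val hn
      have h2 : cp n ((1 : G) • α) = ((1 : G) * (↑n)⁻¹) • α := cp_apply n 1
      rw [h1] at h2
      simp only [one_mul, one_smul, Equiv.Perm.coe_one, id_eq] at h2
      have : (↑n)⁻¹ ∈ Hs := by
        rw [hHs, MulAction.mem_stabilizer_iff]; exact h2.symm
      have : (↑n : G) ∈ Hs := by simpa using Hs.inv_mem this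
      exact this
    · intro hn
      have hmem : (↑n : G) ∈ Hs := hn
      rw [hHs, MulAction.mem_stabilizer_iff] at hmem
      have hinv : ((n : G))⁻¹ • α = α := by
        rw [inv_smul_eq_iff, hmem]
      apply Subtype.ext
      ext β
      show cp n β = β
      conv_lhs => rw [← ht β]
      rw [cp_apply, mul_smul, hinv, ht]
  have hsurj : Function.Surjective φ := by
    rintro ⟨c, hc⟩
    rw [Subgroup.mem_centralizer_iff] at hc
    set g : G := t (c α) with hg
    have hgα : g • α = c α := ht (c α)
    -- commutation: for any h : G, c (h • β) = h • c β
    have hcomm : ∀ (h : G) (β : Ω), c ((h : Equiv.Perm Ω) β) = (h : Equiv.Perm Ω) (c β) := by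
      intro h β
      have := hc ↑h h.2
      calc c ((h : Equiv.Perm Ω) β) = (c * (h : Equiv.Perm Ω)) β := rfl
        _ = ((h : Equiv.Perm Ω) * c) β := by rw [this]
        _ = (h : Equiv.Perm Ω) (c β) := rfl
    -- c⁻¹ α = g⁻¹ • α
    have hcinv : c⁻¹ α = g⁻¹ • α := by
      have h1 : c ((g⁻¹ : G) • α) = α := by
        have := hcomm g⁻¹ α
        show c ((g⁻¹ : G) • α) = α
        calc c ((g⁻¹ : G) • α) = ((g⁻¹ : G) : Equiv.Perm Ω) (c α) := hcomm g⁻¹ α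
          _ = (g⁻¹ : G) • (g • α) := by rw [hgα]; rfl
          _ = α := by rw [smul_smul]; simp
      calc c⁻¹ α = c⁻¹ (c ((g⁻¹ : G) • α)) := by rw [h1]
        _ = (g⁻¹ : G) • α := c.symm_apply_apply _
    -- g normalizes Hs
    have hgN : g ∈ N := by
      rw [hN, Subgroup.mem_normalizer_iff]
      intro h
      have fwd : ∀ h' : G, h' ∈ Hs → g * h' * g⁻¹ ∈ Hs := by
        intro h' hh'
        rw [hHs, MulAction.mem_stabilizer_iff] at hh' ⊢
        have key : (h' : Equiv.Perm Ω) (c⁻¹ α) = c⁻¹ α := by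
          calc (h' : Equiv.Perm Ω) (c⁻¹ α) = c⁻¹ (c ((h' : Equiv.Perm Ω) (c⁻¹ α))) := (c.symm_apply_apply _).symm
            _ = c⁻¹ ((h' : Equiv.Perm Ω) (c (c⁻¹ α))) := by rw [hcomm h']
            _ = c⁻¹ ((h' : Equiv.Perm Ω) α) := by rw [show c (c⁻¹ α) = α from c.apply_symm_apply α]
            _ = c⁻¹ α := by
                have : (h' : Equiv.Perm Ω) α = α := hh'
                rw [this]
        have key2 : h' • (g⁻¹ • α) = g⁻¹ • α := by
          rw [← hcinv]; exact key
        rw [mul_smul, mul_smul, key2, smul_smul]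
        simp
      have bwd : ∀ h' : G, h' ∈ Hs → g⁻¹ * h' * g ∈ Hs := by
        intro h' hh'
        rw [hHs, MulAction.mem_stabilizer_iff] at hh' ⊢
        have key : (h' : Equiv.Perm Ω) (c α) = c α := by
          calc (h' : Equiv.Perm Ω) (c α) = c ((h' : Equiv.Perm Ω) α) := (hcomm h' α).symm
            _ = c α := by
                have : (h' : Equiv.Perm Ω) α = α := hh'
                rw [this]
        have key2 : h' • (g • α) = g • α := by rw [hgα]; exact key
        rw [mul_smul, mul_smul, key2, smul_smul]
        simp
      constructor
      · exact fun hh => fwd h hh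
      · intro hh
        have := bwd _ hh
        simpa [mul_assoc] using this
    refine ⟨⟨g⁻¹, N.inv_mem hgN⟩, ?_⟩
    apply Subtype.ext
    show cp ⟨g⁻¹, _⟩ = c
    ext β
    have hβ : β = t β • α := (ht β).symm
    rw [hβ]
    rw [show cp ⟨g⁻¹, N.inv_mem hgN⟩ (t β • α) = (t β * (g⁻¹ : G)⁻¹) • α from
      cp_apply ⟨g⁻¹, N.inv_mem hgN⟩ (t β)]
    calc (t β * g⁻¹⁻¹) • α = t β • (g • α) := by rw [mul_smul, inv_inv]
      _ = t β • (c α) := by rw [hgα]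
      _ = c (t β • α) := (hcomm (t β) α).symm
  -- assemble
  have e1 : N ⧸ φ.ker ≃* Subgroup.centralizer (G : Set (Equiv.Perm Ω)) :=
    QuotientGroup.quotientKerEquivOfSurjective φ hsurj
  have e2 : (N ⧸ Hs.subgroupOf N) ≃* N ⧸ φ.ker :=
    QuotientGroup.quotientMulEquivOfEq hker.symm
  exact ⟨(e2.trans e1).symm⟩
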